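/- arXiv:1708.07620 — 3 statements merged into one kernel-verified Lean document; each statement's English description precedes it below -/
import Mathlib

section
/- Under the SETUP, for every w ∈ S^⊥ the level set S_0(w) = {w' ∈ S^⊥ : D(w') ≤ D(w)} is compact. -/
noncomputable section

open scoped BigOperators

abbrev Evec (d : ℕ) := EuclideanSpace ℝ (Fin d)
abbrev ENvec (n d : ℕ) := PiLp 2 (fun _ : Fin n => EuclideanSpace ℝ (Fin d))

/-- Real inner product on `ℝ^d`. -/
def ip {d : ℕ} (x y : Evec d) : ℝ := inner ℝ x y

/-- Real inner product on `ℝ^{nd}`. -/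
def ipN {n d : ℕ} (x y : ENvec n d) : ℝ := inner ℝ x y

/-- `g` is a subgradient of `f` at `x`. -/
def IsSubgradientAt {d : ℕ} (f : Evec d → ℝ) (g x : Evec d) : Prop :=
  ∀ y, f x + ip g (y - x) ≤ f y

/-- `f` is strongly convex on `X` with parameter `θ`. -/
def StrongConvexOnWith {d : ℕ} (X : Set (Evec d)) (θ : ℝ) (f : Evec d → ℝ) : Prop :=
  ∀ x ∈ X, ∀ y ∈ X, ∀ g, IsSubgradientAt f g x →
    θ / 2 * ‖y - x‖ ^ 2 ≤ f y - f x - ip g (y - x)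

structure Setup (n d : ℕ) : Type where
  hn : 2 ≤ n
  hd : 1 ≤ d
  X : Fin n → Set (Evec d)
  f : Fin n → Evec d → ℝ
  θ : Fin n → ℝ
  hθ : ∀ i, 0 < θ i
  hXne : ∀ i, (X i).Nonempty
  hXclosed : ∀ i, IsClosed (X i)
  hXconv : ∀ i, Convex ℝ (X i)
  hfconv : ∀ i, ConvexOn ℝ Set.univ (f i)
  hstrong : ∀ i, StrongConvexOnWith (X i) (θ i) (f i)
  hzero : (0 : Evec d) ∈ interior (⋂ i, X i)
  xt : Fin n → Evec d → Evec d
  hxt_mem : ∀ i w, xt i w ∈ X i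
  hxt_max : ∀ i w, ∀ x ∈ X i, ip w x - f i x ≤ ip w (xt i w) - f i (xt i w)
  hxt_uniq : ∀ i w x, x ∈ X i →
    ip w x - f i x = ip w (xt i w) - f i (xt i w) → x = xt i w
  xstar : Evec d
  hxstar_mem : xstar ∈ ⋂ i, X i
  hxstar_min : ∀ x ∈ ⋂ i, X i, (∑ i, f i xstar) ≤ ∑ i, f i x

namespace Setup

variable {n d : ℕ} (P : Setup n d)

/-- Lipschitz constants `L_i = 1/θ_i`. -/
def Lip (i : Fin n) : ℝ := 1 / P.θ i

/-- `L = max_i L_i`. -/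
def Lmax : ℝ := ⨆ i, P.Lip i

/-- The conjugate function `d_i`. -/
def dconj (i : Fin n) (w : Evec d) : ℝ := ip w (P.xt i w) - P.f i (P.xt i w)

/-- The Fenchel dual function `D`. -/
def D (w : ENvec n d) : ℝ := ∑ i, P.dconj i (w i)

/-- The map `x̃ = ∇D`. -/
def xtv (w : ENvec n d) : ENvec n d := WithLp.toLp 2 (fun i => P.xt i (w i))

/-- The primal objective `F`. -/
def Fobj (x : ENvec n d) : ℝ := ∑ i, P.f i (x i)

/-- The optimal primal value. -/
def Fstar : ℝ := ∑ i, P.f i P.xstar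

/-- The primal optimum `𝐱* = (x*, …, x*)`. -/
def xstarv : ENvec n d := WithLp.toLp 2 (fun _ => P.xstar)

end Setup

/-- The subspace `S^⊥ = {w : w_1 + ⋯ + w_n = 0}`. -/
def Sperp (n d : ℕ) : Submodule ℝ (ENvec n d) where
  carrier := {w | ∑ i, w i = 0}
  add_mem' := by
    intro a b ha hb
    simp only [Set.mem_setOf_eq] at ha hb ⊢
    calc ∑ i, (a + b) i = ∑ i, (a i + b i) := rfl
    _ = (∑ i, a i) + ∑ i, b i := Finset.sum_add_distrib
    _ = 0 := by rw [ha, hb, add_zero]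
  zero_mem' := by
    simp only [Set.mem_setOf_eq]
    calc ∑ i, (0 : ENvec n d) i = ∑ _i : Fin n, (0 : Evec d) := rfl
    _ = 0 := by simp
  smul_mem' := by
    intro c a ha
    simp only [Set.mem_setOf_eq] at ha ⊢
    calc ∑ i, (c • a) i = ∑ i, c • a i := rfl
    _ = c • ∑ i, a i := Finset.smul_sum.symm
    _ = 0 := by rw [ha, smul_zero]

/-- Orthogonal projection onto `S^⊥`. -/
def projSperp {n d : ℕ} (x : ENvec n d) : ENvec n d :=
  (Submodule.orthogonalProjection (Sperp n d) x : ENvec n d)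

namespace Setup

variable {n d : ℕ} (P : Setup n d)

/-- The optimal dual value `D* = min_{w ∈ S^⊥} D(w)`. -/
def Dstar : ℝ := sInf (P.D '' (Sperp n d : Set (ENvec n d)))

end Setup

/-- Block action of `H ⊗ I_d` on `ℝ^{nd}`. -/
def blockMul {n d : ℕ} (H : Matrix (Fin n) (Fin n) ℝ) (w : ENvec n d) : ENvec n d :=
  WithLp.toLp 2 (fun i => ∑ j, H i j • w j)

/-- A time-varying sequence of weighted undirected graphs. -/
structure GraphSeq (n : ℕ) : Type where
  adj : ℕ → Fin n → Fin n → Bool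
  adj_symm : ∀ k i j, adj k i j = adj k j i
  adj_irrefl : ∀ k i, adj k i i = false
  adj_ne : ∀ k, ∃ i j, adj k i j = true
  h : ℕ → Fin n → Fin n → ℝ
  h_symm : ∀ k i j, h k i j = h k j i
  hlow : ℝ
  hhigh : ℝ
  hlow_pos : 0 < hlow
  h_mem : ∀ k i j, adj k i j = true → h k i j ∈ Set.Icc hlow hhigh

namespace GraphSeq

variable {n : ℕ} (Gs : GraphSeq n)

/-- The weight matrix `H_{G^k}`. -/
def H (k : ℕ) : Matrix (Fin n) (Fin n) ℝ :=
  Matrix.of fun i j =>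
    if i = j then ∑ l, (if Gs.adj k i l = true then Gs.h k i l else 0)
    else if Gs.adj k i j = true then -(Gs.h k i j) else 0

end GraphSeq

/-- The Fenchel dual gradient algorithm: step sizes, iterates, and their defining relations. -/
structure Algo (n d : ℕ) (P : Setup n d) (Gs : GraphSeq n) : Type where
  δ : ℝ
  hδ_pos : 0 < δ
  hδ : ∀ k, (δ • Matrix.diagonal (fun i => (P.Lip i)⁻¹) - Gs.H k).PosSemidef
  αlo : ℝ
  αhi : ℝ
  hαlo : 0 < αlo
  hαhi : αhi < 2 / δ
  α : ℕ → ℝ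
  hα : ∀ k, α k ∈ Set.Icc αlo αhi
  w : ℕ → ENvec n d
  hw0 : w 0 ∈ Sperp n d
  hrec : ∀ k, w (k + 1) = w k - α k • blockMul (Gs.H k) (P.xtv (w k))

namespace Algo

variable {n d : ℕ} {P : Setup n d} {Gs : GraphSeq n} (A : Algo n d P Gs)

/-- Primal iterates `x^k = ∇D(w^k)`. -/
def x (k : ℕ) : ENvec n d := P.xtv (A.w k)

/-- The constant `ρ = min{α̲ − α̲²δ/2, ᾱ − ᾱ²δ/2}`. -/
def ρ : ℝ := min (A.αlo - A.αlo ^ 2 * A.δ / 2) (A.αhi - A.αhi ^ 2 * A.δ / 2)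

end Algo



section Aux

lemma dconj_convexOn {n d : ℕ} (P : Setup n d) (i : Fin n) :
    ConvexOn ℝ Set.univ (P.dconj i) := by
  refine ⟨convex_univ, ?_⟩
  intro w1 _ w2 _ a b ha hb hab
  set w := a • w1 + b • w2 with hw
  set x := P.xt i w with hx
  have hxX : x ∈ P.X i := P.hxt_mem i w
  have h1 : ip w1 x - P.f i x ≤ P.dconj i w1 := P.hxt_max i w1 x hxX
  have h2 : ip w2 x - P.f i x ≤ P.dconj i w2 := P.hxt_max i w2 x hxX
  have hip : ip w x = a * ip w1 x + b * ip w2 x := by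
    simp [ip, hw, inner_add_left, real_inner_smul_left, Finset.mul_sum, mul_assoc]
  have hD : P.dconj i w = ip w x - P.f i x := rfl
  have : P.dconj i w = a * (ip w1 x - P.f i x) + b * (ip w2 x - P.f i x) := by
    rw [hD, hip]
    linear_combination (P.f i x) * hab
  rw [this]
  simp only [smul_eq_mul]
  have := mul_le_mul_of_nonneg_left h1 ha
  have := mul_le_mul_of_nonneg_left h2 hb
  linarith

lemma dconj_continuous {n d : ℕ} (P : Setup n d) (i : Fin n) :
    Continuous (P.dconj i) := by
  have h := (dconj_convexOn P i).continuousOn isOpen_univ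
  rw [← continuousOn_univ]
  exact h

lemma D_continuous {n d : ℕ} (P : Setup n d) : Continuous P.D := by
  have heval : ∀ i : Fin n, Continuous (fun w : ENvec n d => w i) := by
    intro i
    exact (continuous_apply i).comp
      (PiLp.continuousLinearEquiv 2 ℝ (fun _ : Fin n => Evec d)).continuous
  exact continuous_finset_sum _ fun i _ =>
    (dconj_continuous P i).comp (heval i)

lemma dconj_coercive {n d : ℕ} (P : Setup n d) :
    ∃ r > (0:ℝ), ∃ M : Fin n → ℝ,
      ∀ i (w : Evec d), r * ‖w‖ - M i ≤ P.dconj i w := by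
  obtain ⟨ε, hε, hball⟩ := Metric.mem_nhds_iff.mp
    (mem_interior_iff_mem_nhds.mp P.hzero)
  set r := ε / 2 with hr
  have hrpos : 0 < r := by positivity
  have hsub : ∀ i, Metric.closedBall (0 : Evec d) r ⊆ P.X i := by
    intro i x hx
    have : x ∈ Metric.ball (0 : Evec d) ε := by
      have := Metric.mem_closedBall.mp hx
      exact Metric.mem_ball.mpr (lt_of_le_of_lt this (by linarith))
    exact Set.mem_iInter.mp (hball this) i
  have hbdd : ∀ i, ∃ Mi : ℝ, ∀ x ∈ Metric.closedBall (0 : Evec d) r, P.f i x ≤ Mi := by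
    intro i
    have hc : ContinuousOn (P.f i) (Metric.closedBall (0 : Evec d) r) := by
      have := (P.hfconv i).continuousOn isOpen_univ
      exact this.mono (Set.subset_univ _)
    obtain ⟨Mi, hMi⟩ := ((isCompact_closedBall (0:Evec d) r).bddAbove_image hc)
    exact ⟨Mi, fun x hx => hMi (Set.mem_image_of_mem _ hx)⟩
  choose M hM using hbdd
  refine ⟨r, hrpos, M, ?_⟩
  intro i w
  by_cases hw : w = 0
  · subst hw
    have h0X : (0 : Evec d) ∈ P.X i := hsub i (Metric.mem_closedBall_self hrpos.le)
    have := P.hxt_max i 0 0 h0X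
    have hf0 : P.f i 0 ≤ M i := hM i 0 (Metric.mem_closedBall_self hrpos.le)
    simp only [norm_zero, mul_zero] at this ⊢
    have hip0 : ip (0:Evec d) 0 = 0 := by simp [ip]
    rw [hip0] at this
    have hd0 : P.dconj i 0 = ip 0 (P.xt i 0) - P.f i (P.xt i 0) := rfl
    rw [hd0]
    linarith
  · have hwn : 0 < ‖w‖ := norm_pos_iff.mpr hw
    set x : Evec d := (r / ‖w‖) • w with hxdef
    have hxn : ‖x‖ = r := by
      rw [hxdef, norm_smul, Real.norm_eq_abs, abs_of_pos (by positivity)]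
      field_simp
    have hxball : x ∈ Metric.closedBall (0 : Evec d) r := by
      simp [Metric.mem_closedBall, hxn]
    have hxX : x ∈ P.X i := hsub i hxball
    have hmax := P.hxt_max i w x hxX
    have hiwx : ip w x = r * ‖w‖ := by
      rw [hxdef]
      simp only [ip, real_inner_smul_right, real_inner_self_eq_norm_sq]
      field_simp
    have hfx : P.f i x ≤ M i := hM i x hxball
    rw [hiwx] at hmax
    have hdw : P.dconj i w = ip w (P.xt i w) - P.f i (P.xt i w) := rfl
    rw [hdw]
    linarith

theorem stmt3' {n d : ℕ} (P : Setup n d) :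
    ∀ w ∈ Sperp n d, IsCompact {w' : ENvec n d | w' ∈ Sperp n d ∧ P.D w' ≤ P.D w} := by
  intro w hw
  obtain ⟨r, hrpos, M, hcoer⟩ := dconj_coercive P
  set C : ℝ := (P.D w + ∑ i, M i) / r with hC
  have hbound : ∀ w' : ENvec n d, P.D w' ≤ P.D w → ‖w'‖ ≤ C := by
    intro w' hle
    have h1 : ∀ i, r * ‖w' i‖ - M i ≤ P.dconj i (w' i) := fun i => hcoer i (w' i)
    have hsum : r * (∑ i, ‖w' i‖) - (∑ i, M i) ≤ P.D w' := by
      have := Finset.sum_le_sum (fun i (_ : i ∈ Finset.univ) => h1 i)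
      simpa [Finset.sum_sub_distrib, Finset.mul_sum, Setup.D] using this
    have hnorm : ‖w'‖ ≤ ∑ i, ‖w' i‖ := by
      have h2 : ‖w'‖ = Real.sqrt (∑ i, ‖w' i‖ ^ 2) := PiLp.norm_eq_of_L2 w'
      rw [h2]
      have h3 : (∑ i, ‖w' i‖ ^ 2) ≤ (∑ i, ‖w' i‖) ^ 2 :=
        Finset.sum_sq_le_sq_sum_of_nonneg (fun i _ => norm_nonneg _)
      calc Real.sqrt (∑ i, ‖w' i‖ ^ 2) ≤ Real.sqrt ((∑ i, ‖w' i‖) ^ 2) :=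
            Real.sqrt_le_sqrt h3
        _ = ∑ i, ‖w' i‖ := Real.sqrt_sq (Finset.sum_nonneg fun i _ => norm_nonneg _)
    have : r * ‖w'‖ ≤ P.D w + ∑ i, M i := by
      have := mul_le_mul_of_nonneg_left hnorm hrpos.le
      linarith
    rw [hC, le_div_iff₀ hrpos]
    linarith
  have hclosed : IsClosed {w' : ENvec n d | w' ∈ Sperp n d ∧ P.D w' ≤ P.D w} := by
    have h1 : IsClosed ((Sperp n d : Set (ENvec n d))) :=
      by
        have : ((Sperp n d : Set (ENvec n d))) = {w : ENvec n d | ∑ i, w i = 0} := rfl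
        rw [this]
        exact isClosed_eq (continuous_finset_sum _ fun i _ => (PiLp.continuous_apply 2 _ i)) continuous_const
    have h2 : IsClosed {w' : ENvec n d | P.D w' ≤ P.D w} :=
      isClosed_le (D_continuous P) continuous_const
    exact h1.inter h2
  have hsubset : {w' : ENvec n d | w' ∈ Sperp n d ∧ P.D w' ≤ P.D w} ⊆
      Metric.closedBall (0 : ENvec n d) C := by
    intro w' hw'
    simp only [Metric.mem_closedBall, dist_zero_right]
    exact hbound w' hw'.2
  exact (isCompact_closedBall (0 : ENvec n d) C).of_isClosed_subset hclosed hsubset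

end Aux

theorem stmt3 {n d : ℕ} (P : Setup n d) :
    ∀ w ∈ Sperp n d, IsCompact {w' : ENvec n d | w' ∈ Sperp n d ∧ P.D w' ≤ P.D w} := by
  exact stmt3' P
end
end

section
/- Under the SETUP and the ALGORITHM, for every k ≥ 0 the iterates satisfy D(w^{k+1}) − D(w^k) ≤ −ρ ⟨∇D(w^k), (H_{G^k} ⊗ I_d) ∇D(w^k)⟩, where ρ = min{α̲ − α̲²δ/2, ᾱ − ᾱ²δ/2} ∈ (0, ∞). -/
noncomputable section

open scoped BigOperators

lemma my_exists_subgradient {d : ℕ} {f : Evec d → ℝ} (hf : ConvexOn ℝ Set.univ f)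
    (x : Evec d) : ∃ g, IsSubgradientAt f g x := by
  have hcont : Continuous f := by
    have := hf.continuousOn isOpen_univ
    rwa [continuousOn_univ] at this
  set s : Set (Evec d × ℝ) := {p | f p.1 < p.2} with hs
  have hopen : IsOpen s := isOpen_lt (hcont.comp continuous_fst) continuous_snd
  have hconv : Convex ℝ s := by
    intro p hp q hq a b ha hb hab
    simp only [hs, Set.mem_setOf_eq] at hp hq ⊢
    rcases ha.eq_or_lt with rfl | ha'
    · have hb1 : b = 1 := by linarith
      simp only [zero_smul, zero_add, hb1, one_smul]
      exact hq
    rcases hb.eq_or_lt with rfl | hb'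
    · have ha1 : a = 1 := by linarith
      simpa [ha1] using hp
    have := hf.2 (Set.mem_univ p.1) (Set.mem_univ q.1) ha hb hab
    calc f (a • p.1 + b • q.1) ≤ a * f p.1 + b * f q.1 := this
    _ < a * p.2 + b * q.2 := by
        apply add_lt_add
        · exact (mul_lt_mul_iff_right₀ ha').2 hp
        · exact (mul_lt_mul_iff_right₀ hb').2 hq
  have hxs : ((x, f x) : Evec d × ℝ) ∉ s := by simp [hs]
  obtain ⟨φ, hφ⟩ := geometric_hahn_banach_open_point hconv hopen hxs
  set c : ℝ := φ (0, 1) with hc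
  have hφsplit : ∀ (y : Evec d) (t : ℝ), φ (y, t) = φ (y, 0) + t * c := by
    intro y t
    have : (y, t) = (y, (0:ℝ)) + t • ((0 : Evec d), (1:ℝ)) := by
      simp [Prod.ext_iff]
    rw [this, map_add, map_smul, smul_eq_mul, hc]
  have hcneg : c < 0 := by
    have h1 : φ (x, f x + 1) < φ (x, f x) := hφ _ (by simp [hs])
    rw [hφsplit x (f x + 1), hφsplit x (f x)] at h1
    linarith
  have hmain : ∀ y : Evec d, φ (y, 0) + f y * c ≤ φ (x, 0) + f x * c := by
    intro y
    apply le_of_forall_pos_le_add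
    intro ε hε
    have h1 : φ (y, f y + ε / (-c)) < φ (x, f x) := by
      apply hφ
      simp only [hs, Set.mem_setOf_eq]
      have : 0 < ε / (-c) := div_pos hε (by linarith)
      linarith
    rw [hφsplit y (f y + ε / (-c)), hφsplit x (f x)] at h1
    have hne : c ≠ 0 := ne_of_lt hcneg
    have heq : ε / (-c) * c = -ε := by
      rw [div_mul_eq_mul_div, mul_comm, ← div_mul_eq_mul_div, div_neg, neg_mul,
        div_self hne, one_mul]
    nlinarith [h1]
  -- turn the functional y ↦ φ (y, 0) into a vector
  set ψ : Evec d →L[ℝ] ℝ := φ.comp (ContinuousLinearMap.inl ℝ (Evec d) ℝ) with hψ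
  have hψval : ∀ y, ψ y = φ (y, 0) := by intro y; simp [hψ]
  set g : Evec d := (-c)⁻¹ • ((InnerProductSpace.toDual ℝ (Evec d)).symm ψ) with hg
  refine ⟨g, fun y => ?_⟩
  have hip : ip g (y - x) = (ψ y - ψ x) / (-c) := by
    rw [ip, hg, real_inner_smul_left, InnerProductSpace.toDual_symm_apply, map_sub,
      inv_mul_eq_div]
  rw [hip, hψval, hψval]
  have h2 := hmain y
  have hcpos : 0 < -c := by linarith
  have h3 : (φ (y, 0) - φ (x, 0)) / (-c) ≤ f y - f x := by
    rw [div_le_iff₀ hcpos]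
    nlinarith
  linarith


lemma strong_combo {d : ℕ} {X : Set (Evec d)} {θ : ℝ} {f : Evec d → ℝ}
    (hfc : ConvexOn ℝ Set.univ f) (hXc : Convex ℝ X) (hs : StrongConvexOnWith X θ f)
    {u v : Evec d} (hu : u ∈ X) (hv : v ∈ X) {t : ℝ} (ht0 : 0 ≤ t) (ht1 : t ≤ 1) :
    f ((1-t) • u + t • v) ≤ (1-t) * f u + t * f v - θ/2 * (t*(1-t)) * ‖u - v‖^2 := by
  obtain ⟨g, hg⟩ := my_exists_subgradient hfc ((1-t) • u + t • v)
  set z := (1-t) • u + t • v with hz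
  have hzX : z ∈ X := hXc hu hv (by linarith) ht0 (by ring)
  have h1 := hs z hzX u hu g hg
  have h2 := hs z hzX v hv g hg
  have huz : u - z = t • (u - v) := by rw [hz]; module
  have hvz : v - z = (1-t) • (v - u) := by rw [hz]; module
  rw [huz] at h1
  rw [hvz] at h2
  have hn1 : ‖t • (u - v)‖^2 = t^2 * ‖u - v‖^2 := by
    rw [norm_smul, Real.norm_eq_abs, abs_of_nonneg ht0, mul_pow]
  have hn2 : ‖(1-t) • (v - u)‖^2 = (1-t)^2 * ‖u - v‖^2 := by
    rw [norm_smul, Real.norm_eq_abs, abs_of_nonneg (by linarith), mul_pow, norm_sub_rev]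
  have hi1 : ip g (t • (u - v)) = t * ip g (u - v) := real_inner_smul_right g _ t
  have hi2 : ip g ((1-t) • (v - u)) = -((1-t) * ip g (u - v)) := by
    rw [ip, real_inner_smul_right, show v - u = -(u - v) by abel, inner_neg_right]
    simp only [ip]
    ring
  rw [hn1, hi1] at h1
  rw [hn2, hi2] at h2
  nlinarith [mul_le_mul_of_nonneg_left h1 (by linarith : (0:ℝ) ≤ 1 - t),
    mul_le_mul_of_nonneg_left h2 ht0]

namespace Setup

variable {n d : ℕ} (P : Setup n d)

/-- The key strong-optimality inequality. -/
lemma key_ineq (i : Fin n) (w : Evec d) {x : Evec d} (hx : x ∈ P.X i) :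
    P.θ i / 2 * ‖x - P.xt i w‖^2 + ip w (x - P.xt i w) ≤ P.f i x - P.f i (P.xt i w) := by
  set x' := P.xt i w with hx'
  set s := ‖x - x'‖^2 with hsdef
  have hkey : ∀ t : ℝ, t ∈ Set.Ioo (0:ℝ) 1 →
      ip w (x - x') ≤ P.f i x - P.f i x' - P.θ i / 2 * (1-t) * s := by
    intro t ht
    obtain ⟨ht0, ht1⟩ := ht
    have hcombo := strong_combo (P.hfconv i) (P.hXconv i) (P.hstrong i)
      (P.hxt_mem i w) hx ht0.le ht1.le
    set z := (1-t) • x' + t • x with hzdef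
    have hzX : z ∈ P.X i := (P.hXconv i) (P.hxt_mem i w) hx (by linarith) ht0.le (by ring)
    have hopt := P.hxt_max i w z hzX
    have hiz : ip w z = (1-t) * ip w x' + t * ip w x := by
      simp only [ip, hzdef, inner_add_right, real_inner_smul_right]
    have hnorm : ‖x' - x‖^2 = s := by rw [hsdef, norm_sub_rev]
    rw [hnorm] at hcombo
    -- hopt : ip w z - f z ≤ ip w x' - f x'
    -- hcombo : f z ≤ (1-t) f x' + t f x - θ/2 (t(1-t)) s
    have hθ := P.hθ i
    have hts : 0 ≤ s := by positivity
    have hsub : ip w (x - x') = ip w x - ip w x' := by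
      simp only [ip, inner_sub_right]
    rw [← hx'] at hopt hcombo
    have hdiv : t * ip w (x - x') ≤ t * (P.f i x - P.f i x' - P.θ i / 2 * (1-t) * s) := by
      nlinarith [hopt, hcombo, hsub, hiz]
    exact (mul_le_mul_iff_right₀ ht0).1 hdiv
  have hlim : Filter.Tendsto (fun t : ℝ => P.f i x - P.f i x' - P.θ i / 2 * (1-t) * s)
      (nhdsWithin 0 (Set.Ioi 0)) (nhds (P.f i x - P.f i x' - P.θ i / 2 * (1-0) * s)) := by
    apply Filter.Tendsto.mono_left _ nhdsWithin_le_nhds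
    exact (Continuous.tendsto (by continuity) 0)
  have hev : ∀ᶠ t in nhdsWithin (0:ℝ) (Set.Ioi 0),
      ip w (x - x') ≤ P.f i x - P.f i x' - P.θ i / 2 * (1-t) * s := by
    filter_upwards [Ioo_mem_nhdsGT_of_mem (Set.mem_Ico.mpr ⟨le_refl (0:ℝ), one_pos⟩)] with t ht
    exact hkey t ht
  have := ge_of_tendsto hlim hev
  simp only [sub_zero] at this
  linarith

/-- Smoothness of the conjugate. -/
lemma dconj_smooth (i : Fin n) (w w' : Evec d) :
    P.dconj i w' - P.dconj i w - ip (P.xt i w) (w' - w) ≤ P.Lip i / 2 * ‖w' - w‖^2 := by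
  set x := P.xt i w with hxdef
  set x' := P.xt i w' with hx'def
  have hkey := P.key_ineq i w (P.hxt_mem i w')
  rw [← hxdef, ← hx'def] at hkey
  -- θ/2 ‖x' - x‖² + ⟨w, x' - x⟩ ≤ f x' - f x
  set r := ‖x' - x‖ with hrdef
  set a := ‖w' - w‖ with hadef
  have hθ := P.hθ i
  have hra : ip (w' - w) (x' - x) ≤ a * r := by
    calc ip (w' - w) (x' - x) ≤ ‖w' - w‖ * ‖x' - x‖ := real_inner_le_norm _ _
    _ = a * r := rfl
  have hLip : P.Lip i = 1 / P.θ i := rfl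
  have hexpand : P.dconj i w' - P.dconj i w - ip (P.xt i w) (w' - w)
      = ip w' (x' - x) - (P.f i x' - P.f i x) := by
    simp only [Setup.dconj, ← hxdef, ← hx'def, ip, inner_sub_right, inner_sub_left,
      real_inner_comm x w', real_inner_comm x w]
    ring
  have hsplit : ip w' (x' - x) - ip w (x' - x) = ip (w' - w) (x' - x) := by
    simp only [ip, inner_sub_left]
  have hr0 : 0 ≤ r := norm_nonneg _
  have ha0 : 0 ≤ a := norm_nonneg _
  have hfinal : a * r - P.θ i / 2 * r^2 ≤ 1 / P.θ i / 2 * a^2 := by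
    rw [div_div, one_div, inv_mul_eq_div, le_div_iff₀ (by positivity : (0:ℝ) < P.θ i * 2)]
    nlinarith [sq_nonneg (a - P.θ i * r)]
  rw [hexpand, hLip]
  linarith [hkey, hra, hsplit, hfinal]

end Setup


lemma ip_eq_sum {d : ℕ} (x y : Evec d) : ip x y = ∑ c, x c * y c := by
  simp [ip, PiLp.inner_apply, RCLike.inner_apply, conj_trivial]
  exact Finset.sum_congr rfl fun _ _ => mul_comm _ _

lemma ipN_eq_sum {n d : ℕ} (a b : ENvec n d) : ipN a b = ∑ i, ip (a i) (b i) := by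
  simp [ipN, PiLp.inner_apply, ip]

lemma ipN_blockMul_eq {n d : ℕ} (M : Matrix (Fin n) (Fin n) ℝ) (a b : ENvec n d) :
    ipN a (blockMul M b) = ∑ i, ∑ j, M i j * ip (a i) (b j) := by
  rw [ipN_eq_sum]
  apply Finset.sum_congr rfl
  intro i _
  show ip (a i) (∑ j, M i j • b j) = _
  simp only [ip, inner_sum, real_inner_smul_right]

lemma dot_expand {n : ℕ} (M : Matrix (Fin n) (Fin n) ℝ) (v : Fin n → ℝ) :
    dotProduct v (M.mulVec v) = ∑ i, ∑ j, M i j * (v i * v j) := by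
  simp only [dotProduct, Matrix.mulVec, Finset.mul_sum]
  apply Finset.sum_congr rfl
  intro i _
  apply Finset.sum_congr rfl
  intro j _
  ring

lemma psd_block {n d : ℕ} {M : Matrix (Fin n) (Fin n) ℝ} (hM : M.PosSemidef)
    (a : ENvec n d) : 0 ≤ ipN a (blockMul M a) := by
  rw [ipN_blockMul_eq]
  have key : ∑ i, ∑ j, M i j * ip (a i) (a j)
      = ∑ c : Fin d, dotProduct (fun i => a i c) (M.mulVec (fun i => a i c)) := by
    calc ∑ i, ∑ j, M i j * ip (a i) (a j)
        = ∑ i, ∑ j, ∑ c, M i j * (a i c * a j c) := by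
          simp only [ip_eq_sum, Finset.mul_sum]
      _ = ∑ i, ∑ c, ∑ j, M i j * (a i c * a j c) :=
          Finset.sum_congr rfl fun i _ => Finset.sum_comm
      _ = ∑ c, ∑ i, ∑ j, M i j * (a i c * a j c) := Finset.sum_comm
      _ = ∑ c : Fin d, dotProduct (fun i => a i c) (M.mulVec (fun i => a i c)) := by
          apply Finset.sum_congr rfl
          intro c _
          rw [dot_expand]
  rw [key]
  apply Finset.sum_nonneg
  intro c _
  have := hM.dotProduct_mulVec_nonneg (fun i => a i c)
  simpa using this

lemma block_symm {n d : ℕ} {M : Matrix (Fin n) (Fin n) ℝ} (hsym : ∀ i j, M i j = M j i)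
    (a b : ENvec n d) : ipN a (blockMul M b) = ipN b (blockMul M a) := by
  rw [ipN_blockMul_eq, ipN_blockMul_eq, Finset.sum_comm]
  apply Finset.sum_congr rfl
  intro j _
  apply Finset.sum_congr rfl
  intro i _
  rw [hsym j i, ip, ip, real_inner_comm]

lemma H_entry {n : ℕ} (Gs : GraphSeq n) (k : ℕ) (i j : Fin n) :
    Gs.H k i j = (if i = j then ∑ l, (if Gs.adj k i l = true then Gs.h k i l else 0) else 0)
      - (if Gs.adj k i j = true then Gs.h k i j else 0) := by
  by_cases hij : i = j
  · subst hij
    simp [GraphSeq.H, Gs.adj_irrefl k i]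
  · simp only [GraphSeq.H, Matrix.of_apply, if_neg hij, zero_sub]
    split
    · rfl
    · simp

lemma H_symm_entries {n : ℕ} (Gs : GraphSeq n) (k : ℕ) (i j : Fin n) :
    Gs.H k i j = Gs.H k j i := by
  rw [H_entry, H_entry]
  have h1 : Gs.adj k i j = Gs.adj k j i := Gs.adj_symm k i j
  have h2 : Gs.h k i j = Gs.h k j i := Gs.h_symm k i j
  by_cases hij : i = j
  · subst hij; rfl
  · rw [if_neg hij, if_neg (Ne.symm hij), h1, h2]

lemma lap_psd {n : ℕ} (Gs : GraphSeq n) (k : ℕ) : (Gs.H k).PosSemidef := by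
  classical
  set A : Fin n → Fin n → ℝ := fun i j => if Gs.adj k i j = true then Gs.h k i j else 0 with hA
  have hAsymm : ∀ i j, A i j = A j i := by
    intro i j; simp only [hA]; rw [Gs.adj_symm k i j, Gs.h_symm k i j]
  have hAnn : ∀ i j, 0 ≤ A i j := by
    intro i j; simp only [hA]; split
    · next h => exact le_trans Gs.hlow_pos.le (Gs.h_mem k i j h).1
    · exact le_refl 0
  have hA0 : ∀ i, A i i = 0 := fun i => by simp [hA, Gs.adj_irrefl k i]
  have hHA : ∀ i j, Gs.H k i j = (if i = j then ∑ l, A i l else 0) - A i j := fun i j =>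
    H_entry Gs k i j
  rw [Matrix.posSemidef_iff_dotProduct_mulVec]
  constructor
  · ext i j
    simp only [Matrix.conjTranspose_apply, star_trivial]
    exact (H_symm_entries Gs k i j).symm
  · intro v
    have hdot : dotProduct (star v) ((Gs.H k).mulVec v) = ∑ i, ∑ j, Gs.H k i j * (v i * v j) := by
      rw [star_trivial, dot_expand]
    have e1 : ∑ i, ∑ j, Gs.H k i j * (v i * v j)
        = ∑ i, ∑ j, A i j * (v i ^ 2 - v i * v j) := by
      apply Finset.sum_congr rfl
      intro i _
      have : ∑ j, (if i = j then ∑ l, A i l else 0) * (v i * v j)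
          = ∑ l, A i l * (v i ^ 2) := by
        simp only [ite_mul, zero_mul]
        rw [Finset.sum_ite_eq]
        simp only [Finset.mem_univ, if_true, Finset.sum_mul]
        apply Finset.sum_congr rfl
        intro l _
        ring
      calc ∑ j, Gs.H k i j * (v i * v j)
          = ∑ j, ((if i = j then ∑ l, A i l else 0) * (v i * v j) - A i j * (v i * v j)) := by
            apply Finset.sum_congr rfl
            intro j _
            rw [hHA i j]
            ring
        _ = ∑ j, (if i = j then ∑ l, A i l else 0) * (v i * v j) - ∑ j, A i j * (v i * v j) :=
            Finset.sum_sub_distrib _ _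
        _ = ∑ l, A i l * v i ^ 2 - ∑ j, A i j * (v i * v j) := by rw [this]
        _ = ∑ j, A i j * (v i ^ 2 - v i * v j) := by
            rw [← Finset.sum_sub_distrib]
            apply Finset.sum_congr rfl
            intro j _
            ring
    have e2 : ∑ i, ∑ j, A i j * (v i ^ 2 - v i * v j)
        = ∑ i, ∑ j, A i j * (v j ^ 2 - v i * v j) := by
      rw [Finset.sum_comm]
      apply Finset.sum_congr rfl
      intro j _
      apply Finset.sum_congr rfl
      intro i _
      rw [hAsymm j i]
      ring
    have e3 : (2:ℝ) * ∑ i, ∑ j, A i j * (v i ^ 2 - v i * v j)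
        = ∑ i, ∑ j, A i j * (v i - v j) ^ 2 := by
      rw [two_mul]
      nth_rewrite 2 [e2]
      rw [← Finset.sum_add_distrib]
      apply Finset.sum_congr rfl
      intro i _
      rw [← Finset.sum_add_distrib]
      apply Finset.sum_congr rfl
      intro j _
      ring
    have e4 : 0 ≤ ∑ i, ∑ j, A i j * (v i - v j) ^ 2 := by
      apply Finset.sum_nonneg
      intro i _
      apply Finset.sum_nonneg
      intro j _
      exact mul_nonneg (hAnn i j) (sq_nonneg _)
    rw [hdot, e1]
    linarith

lemma blockMul_diag_inv {n d : ℕ} (f : Fin n → ℝ) (z : ENvec n d) (i : Fin n) :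
    blockMul (Matrix.diagonal f) z i = f i • z i := by
  simp only [blockMul]
  rw [Finset.sum_eq_single i]
  · rw [Matrix.diagonal_apply_eq]
  · intro j _ hj
    rw [Matrix.diagonal_apply_ne' _ hj, zero_smul]
  · intro h
    exact absurd (Finset.mem_univ i) h

lemma blockMul_sub {n d : ℕ} (M N : Matrix (Fin n) (Fin n) ℝ) (z : ENvec n d) :
    blockMul (M - N) z = blockMul M z - blockMul N z := by
  ext i : 1
  show ∑ j, (M i j - N i j) • z j = _
  rw [show (blockMul M z - blockMul N z) i = blockMul M z i - blockMul N z i from rfl]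
  simp only [blockMul, sub_smul, Finset.sum_sub_distrib]

lemma blockMul_smulmat {n d : ℕ} (c : ℝ) (M : Matrix (Fin n) (Fin n) ℝ) (z : ENvec n d) :
    blockMul (c • M) z = c • blockMul M z := by
  ext i : 1
  show ∑ j, (c * M i j) • z j = c • ∑ j, M i j • z j
  rw [Finset.smul_sum]
  apply Finset.sum_congr rfl
  intro j _
  rw [mul_smul]


lemma blockMul_addv {n d : ℕ} (M : Matrix (Fin n) (Fin n) ℝ) (y z : ENvec n d) :
    blockMul M (y + z) = blockMul M y + blockMul M z := by
  ext i : 1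
  show ∑ j, M i j • (y j + z j) = blockMul M y i + blockMul M z i
  simp only [smul_add, Finset.sum_add_distrib, blockMul]

lemma blockMul_smulv {n d : ℕ} (M : Matrix (Fin n) (Fin n) ℝ) (t : ℝ) (z : ENvec n d) :
    blockMul M (t • z) = t • blockMul M z := by
  ext i : 1
  show ∑ j, M i j • (t • z j) = t • ∑ j, M i j • z j
  rw [Finset.smul_sum]
  apply Finset.sum_congr rfl
  intro j _
  rw [smul_comm]

set_option maxHeartbeats 1000000

theorem stmt5 {n d : ℕ} (P : Setup n d) (Gs : GraphSeq n) (A : Algo n d P Gs) :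
    ∀ k : ℕ, P.D (A.w (k + 1)) - P.D (A.w k) ≤
      -A.ρ * ipN (P.xtv (A.w k)) (blockMul (Gs.H k) (P.xtv (A.w k))) := by
  intro k
  have hrec := A.hrec k
  set w := A.w k with hwdef
  set x := P.xtv w with hxdef
  set u := blockMul (Gs.H k) x with hudef
  set α := A.α k with hαdef
  have hα1 : A.αlo ≤ α := (A.hα k).1
  have hα2 : α ≤ A.αhi := (A.hα k).2
  have hαpos : 0 < α := lt_of_lt_of_le A.hαlo hα1
  have hδp : 0 < A.δ := A.hδ_pos
  set q := ipN x u with hqdef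
  set T := ∑ i, P.Lip i * ‖u i‖^2 with hTdef
  have hLippos : ∀ i, 0 < P.Lip i := fun i => by
    rw [Setup.Lip]
    exact one_div_pos.2 (P.hθ i)
  have hsmooth : P.D (A.w (k+1)) - P.D w ≤ (-α) * q + α^2/2 * T := by
    rw [hrec]
    have hterm : ∀ i : Fin n, P.dconj i ((w - α • u) i) - P.dconj i (w i)
        ≤ -(α * ip (x i) (u i)) + P.Lip i / 2 * (α^2 * ‖u i‖^2) := by
      intro i
      have hs := P.dconj_smooth i (w i) ((w - α • u) i)
      have hx_i : P.xt i (w i) = x i := rfl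
      have hdiff : (w - α • u) i - w i = -(α • u i) := by
        show w i - (α • u) i - w i = -(α • u i)
        show w i - α • u i - w i = -(α • u i)
        abel
      rw [hdiff, hx_i] at hs
      have h1 : ip (x i) (-(α • u i)) = -(α * ip (x i) (u i)) := by
        simp only [ip, inner_neg_right, real_inner_smul_right]
      have h2 : ‖-(α • u i)‖^2 = α^2 * ‖u i‖^2 := by
        rw [norm_neg, norm_smul, Real.norm_eq_abs, mul_pow, sq_abs]
      rw [h1, h2] at hs
      linarith
    have hD : P.D (w - α • u) - P.D w
        = ∑ i, (P.dconj i ((w - α • u) i) - P.dconj i (w i)) := by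
      rw [Setup.D, Setup.D, ← Finset.sum_sub_distrib]
    rw [hD]
    have hq' : q = ∑ i, ip (x i) (u i) := by rw [hqdef, ipN_eq_sum]
    calc ∑ i, (P.dconj i ((w - α • u) i) - P.dconj i (w i))
        ≤ ∑ i, (-(α * ip (x i) (u i)) + P.Lip i / 2 * (α^2 * ‖u i‖^2)) :=
          Finset.sum_le_sum fun i _ => hterm i
      _ = (-α) * q + α^2/2 * T := by
          rw [Finset.sum_add_distrib, hq', hTdef, Finset.mul_sum, Finset.mul_sum]
          congr 1
          · apply Finset.sum_congr rfl
            intro i _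
            ring
          · apply Finset.sum_congr rfl
            intro i _
            ring
  have hT0 : 0 ≤ T := by
    rw [hTdef]
    exact Finset.sum_nonneg fun i _ => mul_nonneg (hLippos i).le (sq_nonneg _)
  have hq0 : 0 ≤ q := by
    rw [hqdef, hudef]
    exact psd_block (lap_psd Gs k) x
  have hsym : ∀ i j, Gs.H k i j = Gs.H k j i := fun i j => H_symm_entries Gs k i j
  have hTq : T ≤ A.δ * q := by
    set b : ENvec n d := WithLp.toLp 2 (fun i => P.Lip i • u i) with hbdef
    have hbu : ipN b u = T := by
      rw [ipN_eq_sum, hTdef]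
      apply Finset.sum_congr rfl
      intro i _
      show ip (P.Lip i • u i) (u i) = _
      rw [ip, real_inner_smul_left, real_inner_self_eq_norm_sq]
    have hpsd := psd_block (A.hδ k) b
    have hexp : blockMul (A.δ • Matrix.diagonal (fun i => (P.Lip i)⁻¹) - Gs.H k) b
        = A.δ • blockMul (Matrix.diagonal fun i => (P.Lip i)⁻¹) b - blockMul (Gs.H k) b := by
      rw [blockMul_sub, blockMul_smulmat]
    have hdiagb : blockMul (Matrix.diagonal fun i => (P.Lip i)⁻¹) b = u := by
      ext i : 1
      rw [blockMul_diag_inv]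
      show (P.Lip i)⁻¹ • (P.Lip i • u i) = u i
      rw [smul_smul, inv_mul_cancel₀ (ne_of_gt (hLippos i)), one_smul]
    rw [hexp, hdiagb] at hpsd
    set qb := ipN b (blockMul (Gs.H k) b) with hqbdef
    have hqb : qb ≤ A.δ * T := by
      have hsplit : ipN b (A.δ • u - blockMul (Gs.H k) b)
          = A.δ * ipN b u - ipN b (blockMul (Gs.H k) b) := by
        simp only [ipN, inner_sub_right, real_inner_smul_right]
      rw [hsplit, hbu, ← hqbdef] at hpsd
      linarith
    have hxb : ipN x (blockMul (Gs.H k) b) = T := by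
      rw [block_symm hsym x b, ← hudef]
      exact hbu
    have hquad : ∀ t : ℝ, 0 ≤ q * (t*t) + (2*T)*t + qb := by
      intro t
      have h0 := psd_block (lap_psd Gs k) (t • x + b)
      rw [blockMul_addv, blockMul_smulv, ← hudef] at h0
      have hxp : ipN (t • x + b) (t • u + blockMul (Gs.H k) b)
          = (t*t) * ipN x u + t * ipN x (blockMul (Gs.H k) b) + t * ipN b u + qb := by
        rw [hqbdef]
        simp only [ipN, inner_add_left, inner_add_right, real_inner_smul_left,
          real_inner_smul_right]
        ring
      rw [hxp, hxb, hbu, ← hqdef] at h0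
      linarith
    have hdis := discrim_le_zero hquad
    rw [discrim] at hdis
    have hT2 : T^2 ≤ q * qb := by nlinarith [hdis]
    have hqqb : q * qb ≤ q * (A.δ * T) := mul_le_mul_of_nonneg_left hqb hq0
    rcases eq_or_lt_of_le hT0 with hTz | hTpos
    · rw [← hTz]
      exact mul_nonneg hδp.le hq0
    · nlinarith [hT2, hqqb, hTpos]
  have hρ : A.ρ ≤ α - α^2 * A.δ / 2 := by
    rw [Algo.ρ]
    rcases le_total (A.αlo - A.αlo^2 * A.δ/2) (A.αhi - A.αhi^2 * A.δ/2) with h | h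
    · rw [min_eq_left h]
      rcases eq_or_lt_of_le (le_trans hα1 hα2) with heq | hlt
      · have hα : α = A.αlo := le_antisymm (heq ▸ hα2) hα1
        rw [hα]
      · nlinarith [mul_nonneg (sub_nonneg.2 hα1) (sub_nonneg.2 hα2), h, hδp.le, hlt,
          mul_nonneg (mul_nonneg (sub_nonneg.2 hα1) (sub_nonneg.2 hα2)) hδp.le,
          mul_nonneg (sub_nonneg.2 hα1) (sub_nonneg.2 h)]
    · rw [min_eq_right h]
      rcases eq_or_lt_of_le (le_trans hα1 hα2) with heq | hlt
      · have hα : α = A.αhi := le_antisymm hα2 (heq ▸ hα1)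
        rw [hα]
      · nlinarith [mul_nonneg (sub_nonneg.2 hα1) (sub_nonneg.2 hα2), h, hδp.le, hlt,
          mul_nonneg (mul_nonneg (sub_nonneg.2 hα1) (sub_nonneg.2 hα2)) hδp.le,
          mul_nonneg (sub_nonneg.2 hα2) (sub_nonneg.2 h)]
  have hstep : (-α) * q + α^2/2 * T ≤ -A.ρ * q := by
    have h1 : α^2/2 * T ≤ α^2/2 * (A.δ * q) :=
      mul_le_mul_of_nonneg_left hTq (by positivity)
    nlinarith [h1, mul_nonneg (sub_nonneg.2 hρ) hq0]
  linarith [hsmooth, hstep]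
end
end

section
/- Under the SETUP, for every w ∈ S^⊥: ‖P_{S^⊥}(x̃(w))‖ ≤ ‖x̃(w) − 𝐱*‖ ≤ √(2L (D(w) − D*)). In particular, D(w) − D* ≥ (1/(2L)) ‖x̃(w) − 𝐱*‖² for all w ∈ S^⊥. -/
noncomputable section

open scoped BigOperators

/-! ### Auxiliary lemmas -/

lemma le_of_forall01 {a b K : ℝ} (h : ∀ t : ℝ, 0 < t → t < 1 → a ≤ b + t * K) : a ≤ b := by
  by_contra hc
  push_neg at hc
  have hK : 0 < |K| + 1 := by positivity
  set t := min (1/2) ((a - b) / (2 * (|K| + 1))) with ht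
  have ht0 : 0 < t := by
    apply lt_min (by norm_num)
    apply div_pos (by linarith) (by positivity)
  have ht1 : t < 1 := lt_of_le_of_lt (min_le_left _ _) (by norm_num)
  have h1 := h t ht0 ht1
  have h2 : t * K ≤ t * (|K| + 1) := by
    apply mul_le_mul_of_nonneg_left _ ht0.le
    linarith [le_abs_self K]
  have h3 : t * (|K| + 1) ≤ (a - b) / 2 := by
    have : t ≤ (a - b) / (2 * (|K| + 1)) := min_le_right _ _
    calc t * (|K| + 1) ≤ ((a - b) / (2 * (|K| + 1))) * (|K| + 1) :=
          mul_le_mul_of_nonneg_right this hK.le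
      _ = (a - b) / 2 := by field_simp
  linarith

def constv {n d : ℕ} (y : Evec d) : ENvec n d := WithLp.toLp 2 (fun _ => y)

lemma inner_constv {n d : ℕ} (w : ENvec n d) (y : Evec d) :
    (inner ℝ w (constv y) : ℝ) = inner ℝ (∑ i, w i) y := by
  rw [PiLp.inner_apply, sum_inner]
  rfl

lemma const_mem_orth {n d : ℕ} (y : Evec d) : constv (n := n) y ∈ (Sperp n d)ᗮ := by
  rw [Submodule.mem_orthogonal]
  intro w hw
  have hw' : ∑ i, w i = 0 := hw
  rw [inner_constv, hw']
  exact inner_zero_left _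

lemma orth_eq_const {n d : ℕ} (hn : 2 ≤ n) (x : ENvec n d) (hx : x ∈ (Sperp n d)ᗮ) :
    ∃ y : Evec d, x = WithLp.toLp 2 (fun _ => y) := by
  have key : ∀ i j : Fin n, x i = x j := by
    intro i j
    rcases eq_or_ne i j with rfl | hij
    · rfl
    set v : Evec d := x i - x j with hv
    set w : ENvec n d := WithLp.toLp 2 (Pi.single i v - Pi.single j v) with hwdef
    have hw : w ∈ Sperp n d := by
      show ∑ k, w k = 0
      have : ∑ k, w k = (∑ k, Pi.single i v k) - ∑ k, Pi.single j v k := by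
        rw [← Finset.sum_sub_distrib]; rfl
      rw [this, Finset.sum_pi_single', Finset.sum_pi_single']
      simp
    have h0 : (inner ℝ w x : ℝ) = 0 := (Submodule.mem_orthogonal _ x).mp hx w hw
    have hsingle : ∀ (k : Fin n) (u : Evec d),
        (∑ l, (inner ℝ ((Pi.single k u : ∀ _ : Fin n, Evec d) l) (x l) : ℝ)) = inner ℝ u (x k) := by
      intro k u
      rw [Finset.sum_eq_single k]
      · rw [Pi.single_eq_same]
      · intro l _ hl
        rw [Pi.single_eq_of_ne hl]
        exact inner_zero_left _
      · intro h; exact absurd (Finset.mem_univ k) h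
    have hcomp : (inner ℝ w x : ℝ) = inner ℝ v (x i) - inner ℝ v (x j) := by
      rw [PiLp.inner_apply]
      have : ∀ l, (inner ℝ (w l) (x l) : ℝ) =
          (inner ℝ ((Pi.single i v : ∀ _ : Fin n, Evec d) l) (x l) : ℝ) -
          (inner ℝ ((Pi.single j v : ∀ _ : Fin n, Evec d) l) (x l) : ℝ) := by
        intro l
        rw [hwdef]
        show (inner ℝ ((Pi.single i v : ∀ _ : Fin n, Evec d) l - (Pi.single j v : ∀ _ : Fin n, Evec d) l) (x l) : ℝ) = _
        rw [inner_sub_left]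
      rw [Finset.sum_congr rfl (fun l _ => this l), Finset.sum_sub_distrib, hsingle, hsingle]
    have : (inner ℝ v (x i - x j) : ℝ) = 0 := by
      rw [inner_sub_right]
      rw [hcomp] at h0
      linarith
    rw [← hv] at this
    have hv0 : v = 0 := by
      rwa [real_inner_self_eq_norm_sq, pow_eq_zero_iff (by norm_num), norm_eq_zero] at this
    have := sub_eq_zero.mp hv0
    exact this
  have hn0 : 0 < n := by omega
  exact ⟨x ⟨0, hn0⟩, PiLp.ext fun i => key i ⟨0, hn0⟩⟩

lemma orth_eq_const' {n d : ℕ} (hn : 2 ≤ n) (x : ENvec n d) (hx : x ∈ (Sperp n d)ᗮ) :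
    ∃ y : Evec d, x = constv y := orth_eq_const hn x hx

lemma exists_subgradient {d : ℕ} (f : Evec d → ℝ) (hf : ConvexOn ℝ Set.univ f) (x : Evec d) :
    ∃ g, IsSubgradientAt f g x := by
  have hcont : Continuous f := hf.locallyLipschitz.continuous
  set s : Set (Evec d × ℝ) := {p | f p.1 < p.2} with hs
  have hopen : IsOpen s := isOpen_lt (hcont.comp continuous_fst) continuous_snd
  have hconv : Convex ℝ s := by
    intro p hp q hq a b ha hb hab
    simp only [hs, Set.mem_setOf_eq] at hp hq ⊢
    have hle : f (a • p.1 + b • q.1) ≤ a * f p.1 + b * f q.1 :=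
      hf.2 (Set.mem_univ _) (Set.mem_univ _) ha hb hab
    have hstrict : a * f p.1 + b * f q.1 < a * p.2 + b * q.2 := by
      rcases ha.lt_or_eq with ha' | ha'
      · have h1 : a * f p.1 < a * p.2 := mul_lt_mul_of_pos_left hp ha'
        have h2 : b * f q.1 ≤ b * q.2 := mul_le_mul_of_nonneg_left hq.le hb
        linarith
      · have hb' : 0 < b := by rw [← ha'] at hab; linarith
        have h1 : a * f p.1 ≤ a * p.2 := by rw [← ha']; simp
        have h2 : b * f q.1 < b * q.2 := mul_lt_mul_of_pos_left hq hb'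
        linarith
    calc f ((a • p + b • q).1) = f (a • p.1 + b • q.1) := rfl
      _ < a * p.2 + b * q.2 := lt_of_le_of_lt hle hstrict
      _ = (a • p + b • q).2 := rfl
  have hx : (x, f x) ∉ s := by simp [hs]
  obtain ⟨φ, hφ⟩ := geometric_hahn_banach_open_point hconv hopen hx
  set β := φ (0, 1) with hβdef
  have hdecomp : ∀ (y : Evec d) (t : ℝ), φ (y, t) = φ (y, 0) + t * β := by
    intro y t
    have he : ((y, t) : Evec d × ℝ) = (y, 0) + t • ((0 : Evec d), (1 : ℝ)) := by
      simp [Prod.ext_iff]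
    rw [he, map_add, map_smul, smul_eq_mul]
  have hβ : β < 0 := by
    have h1 := hφ (x, f x + 1) (by simp [hs])
    rw [hdecomp x (f x + 1), hdecomp x (f x)] at h1
    linarith
  have key : ∀ y, φ (y, 0) + β * f y ≤ φ (x, 0) + β * f x := by
    intro y
    apply le_of_forall01 (K := -β)
    intro t ht0 ht1
    have h1 := hφ (y, f y + t) (by simp [hs, ht0])
    rw [hdecomp y (f y + t), hdecomp x (f x)] at h1
    nlinarith
  set Φ : Evec d × ℝ →L[ℝ] ℝ := φ with hΦ
  set L : Evec d →L[ℝ] ℝ := (-β)⁻¹ • φ.comp (ContinuousLinearMap.inl ℝ (Evec d) ℝ) with hL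
  refine ⟨(InnerProductSpace.toDual ℝ (Evec d)).symm L, fun y => ?_⟩
  have hg : ip ((InnerProductSpace.toDual ℝ (Evec d)).symm L) (y - x)
      = (-β)⁻¹ * (φ (y, 0) - φ (x, 0)) := by
    have := InnerProductSpace.toDual_symm_apply (𝕜 := ℝ) (E := Evec d) (x := y - x) (y := L)
    rw [ip, this, hL]
    simp only [ContinuousLinearMap.smul_apply, ContinuousLinearMap.comp_apply,
      ContinuousLinearMap.inl_apply, smul_eq_mul]
    congr 1
    have : ((y - x, 0) : Evec d × ℝ) = (y, 0) - (x, 0) := by simp [Prod.ext_iff]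
    rw [this, map_sub]
  rw [hg]
  have hb' : 0 < -β := by linarith
  have hkey := key y
  have h2 : (-β)⁻¹ * (φ (y, 0) - φ (x, 0)) ≤ (-β)⁻¹ * (β * (f x - f y)) := by
    apply mul_le_mul_of_nonneg_left _ (inv_nonneg.mpr hb'.le)
    linarith
  have h3 : (-β)⁻¹ * (β * (f x - f y)) = f y - f x := by
    calc (-β)⁻¹ * (β * (f x - f y)) = (β⁻¹ * β) * (f y - f x) := by rw [inv_neg]; ring
      _ = f y - f x := by rw [inv_mul_cancel₀ hβ.ne, one_mul]
  linarith

lemma key_bound {d : ℕ} (X : Set (Evec d)) (f : Evec d → ℝ) (θ : ℝ)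
    (hXconv : Convex ℝ X) (hfconv : ConvexOn ℝ Set.univ f)
    (hstrong : StrongConvexOnWith X θ f)
    (w xtl xs : Evec d) (hxtl : xtl ∈ X) (hxs : xs ∈ X)
    (hmax : ∀ x ∈ X, ip w x - f x ≤ ip w xtl - f xtl) :
    θ / 2 * ‖xtl - xs‖ ^ 2 ≤ (ip w xtl - f xtl) - (ip w xs - f xs) := by
  set N : ℝ := ‖xtl - xs‖ ^ 2 with hN
  have hN0 : 0 ≤ N := by positivity
  apply le_of_forall01 (K := θ / 2 * N)
  intro t ht0 ht1
  set xm : Evec d := (1 - t) • xtl + t • xs with hxm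
  have hmem : xm ∈ X := hXconv hxtl hxs (by linarith) ht0.le (by ring)
  obtain ⟨g, hg⟩ := exists_subgradient f hfconv xm
  have h1 := hstrong xm hmem xtl hxtl g hg
  have h2 := hstrong xm hmem xs hxs g hg
  set I : ℝ := ip g (xs - xtl) with hI
  have e1 : xtl - xm = (-t) • (xs - xtl) := by rw [hxm]; module
  have e2 : xs - xm = (1 - t) • (xs - xtl) := by rw [hxm]; module
  have n1 : ‖xtl - xm‖ ^ 2 = t ^ 2 * N := by
    rw [e1, norm_smul, hN]
    have : ‖xtl - xs‖ = ‖xs - xtl‖ := by rw [norm_sub_rev]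
    rw [this]
    simp [abs_of_pos ht0]
    ring
  have n2 : ‖xs - xm‖ ^ 2 = (1 - t) ^ 2 * N := by
    rw [e2, norm_smul, hN]
    have : ‖xtl - xs‖ = ‖xs - xtl‖ := by rw [norm_sub_rev]
    rw [this]
    rw [Real.norm_eq_abs, abs_of_pos (by linarith : (0:ℝ) < 1 - t)]
    ring
  have i1 : ip g (xtl - xm) = -t * I := by
    rw [e1, hI, ip, ip, real_inner_smul_right]
  have i2 : ip g (xs - xm) = (1 - t) * I := by
    rw [e2, hI, ip, ip, real_inner_smul_right]
  rw [n1, i1] at h1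
  rw [n2, i2] at h2
  -- segment strong convexity
  have hsum : θ / 2 * (t * (1 - t)) * N ≤ (1 - t) * f xtl + t * f xs - f xm := by
    nlinarith [mul_le_mul_of_nonneg_left h1 (by linarith : (0:ℝ) ≤ 1 - t),
      mul_le_mul_of_nonneg_left h2 ht0.le]
  have h3 := hmax xm hmem
  have hip : ip w xm = (1 - t) * ip w xtl + t * ip w xs := by
    rw [hxm, ip, ip, ip, inner_add_right, real_inner_smul_right, real_inner_smul_right]
  have h5 : t * (θ / 2 * (1 - t) * N) ≤ t * ((ip w xtl - f xtl) - (ip w xs - f xs)) := by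
    nlinarith [hsum, h3, hip]
  have h6 : θ / 2 * (1 - t) * N ≤ (ip w xtl - f xtl) - (ip w xs - f xs) :=
    le_of_mul_le_mul_left (by linarith) ht0
  nlinarith [h6]


lemma combo_lt {a b u v u' v' : ℝ} (ha : 0 ≤ a) (hb : 0 ≤ b) (hab : a + b = 1)
    (h1 : u < u') (h2 : v < v') : a * u + b * v < a * u' + b * v' := by
  rcases ha.lt_or_eq with ha' | ha'
  · have := mul_lt_mul_of_pos_left h1 ha'
    have := mul_le_mul_of_nonneg_left h2.le hb
    linarith
  · have hb' : 0 < b := by rw [← ha'] at hab; linarith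
    have := mul_lt_mul_of_pos_left h2 hb'
    rw [← ha']
    simpa using this

lemma comp_norm_le {n d : ℕ} (x : ENvec n d) (i : Fin n) : ‖x i‖ ≤ ‖x‖ := by
  have h1 : ‖x i‖ ^ 2 ≤ ‖x‖ ^ 2 := by
    have h := PiLp.norm_sq_eq_of_L2 (fun _ : Fin n => Evec d) x
    rw [h]
    exact Finset.single_le_sum (f := fun j => ‖x j‖ ^ 2) (fun j _ => by positivity)
      (Finset.mem_univ i)
  nlinarith [norm_nonneg (x i), norm_nonneg x]

namespace Setup

variable {n d : ℕ} (P : Setup n d)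

lemma xstar_mem (i : Fin n) : P.xstar ∈ P.X i := Set.mem_iInter.mp P.hxstar_mem i

lemma Fobj_apply (x : ENvec n d) : P.Fobj x = ∑ i, P.f i (x i) := rfl

lemma Fobj_convex : ConvexOn ℝ Set.univ P.Fobj := by
  refine ⟨convex_univ, ?_⟩
  intro x _ y _ a b ha hb hab
  calc P.Fobj (a • x + b • y) = ∑ i, P.f i (a • x i + b • y i) := rfl
    _ ≤ ∑ i, (a * P.f i (x i) + b * P.f i (y i)) :=
        Finset.sum_le_sum fun i _ =>
          (P.hfconv i).2 (Set.mem_univ _) (Set.mem_univ _) ha hb hab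
    _ = a * ∑ i, P.f i (x i) + b * ∑ i, P.f i (y i) := by
        rw [Finset.sum_add_distrib, Finset.mul_sum, Finset.mul_sum]
    _ = a • P.Fobj x + b • P.Fobj y := by rw [smul_eq_mul, smul_eq_mul]; rfl

lemma Fobj_cont : Continuous P.Fobj := by
  apply continuous_finset_sum
  intro i _
  exact ((P.hfconv i).locallyLipschitz.continuous).comp
    (PiLp.proj (𝕜 := ℝ) 2 (fun _ : Fin n => Evec d) i).continuous

lemma weak_duality : ∀ w ∈ Sperp n d, -P.Fstar ≤ P.D w := by
  intro w hw
  have hw' : ∑ i, w i = 0 := hw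
  have h2 : ∑ i, ip (w i) P.xstar = 0 := by
    simp only [ip]
    rw [← sum_inner, hw']
    exact inner_zero_left _
  calc -P.Fstar = ∑ i, (ip (w i) P.xstar - P.f i P.xstar) := by
        rw [Finset.sum_sub_distrib, h2]
        simp [Setup.Fstar]
    _ ≤ ∑ i, P.dconj i (w i) :=
        Finset.sum_le_sum fun i _ => P.hxt_max i (w i) P.xstar (P.xstar_mem i)
    _ = P.D w := rfl

set_option synthInstance.maxHeartbeats 400000 in
set_option maxHeartbeats 1000000 in
lemma exists_dual_opt : ∃ w ∈ Sperp n d, P.D w ≤ -P.Fstar := by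
  classical
  have hz := P.hzero
  rw [mem_interior_iff_mem_nhds, Metric.mem_nhds_iff] at hz
  obtain ⟨ε, hε, hball⟩ := hz
  set K := Sperp n d with hK
  set C : Set (↥K × ℝ) :=
    {p | ∃ x : ENvec n d, (∀ i, x i ∈ P.X i) ∧
      (∃ y : Evec d, x = (p.1 : ENvec n d) + constv y) ∧ P.Fobj x < p.2} with hC
  set z₀ : ↥K × ℝ := (0, P.Fstar) with hz₀def
  have hz₀ : z₀ ∉ C := by
    rintro ⟨x, hxmem, ⟨y, hxy⟩, hlt⟩
    have hxc : x = constv y := by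
      rw [hxy]
      show (0 : ENvec n d) + constv y = constv y
      rw [zero_add]
    have hy : y ∈ ⋂ i, P.X i := Set.mem_iInter.mpr fun i => by
      have := hxmem i; rwa [hxc] at this
    have hmin := P.hxstar_min y hy
    have : P.Fobj x = ∑ i, P.f i y := by rw [hxc]; rfl
    rw [this] at hlt
    exact absurd hmin (not_le.mpr hlt)
  have hconv : Convex ℝ C := by
    rintro p ⟨x, hx, ⟨y, hxy⟩, hlt⟩ q ⟨x', hx', ⟨y', hxy'⟩, hlt'⟩ a b ha hb hab
    refine ⟨a • x + b • x', fun i => (P.hXconv i) (hx i) (hx' i) ha hb hab,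
      ⟨a • y + b • y', ?_⟩, ?_⟩
    · rw [hxy, hxy']
      refine PiLp.ext fun i => ?_
      show a • ((p.1 : ENvec n d) i + y) + b • ((q.1 : ENvec n d) i + y') =
        ((a • p + b • q).1 : ENvec n d) i + (a • y + b • y')
      show a • ((p.1 : ENvec n d) i + y) + b • ((q.1 : ENvec n d) i + y') =
        (a • (p.1 : ENvec n d) i + b • (q.1 : ENvec n d) i) + (a • y + b • y')
      rw [smul_add, smul_add]
      abel
    · have h1 : P.Fobj (a • x + b • x') ≤ a * P.Fobj x + b * P.Fobj x' := by
        have := P.Fobj_convex.2 (Set.mem_univ x) (Set.mem_univ x') ha hb hab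
        simpa using this
      have h2 : a * P.Fobj x + b * P.Fobj x' < a * p.2 + b * q.2 :=
        combo_lt ha hb hab hlt hlt'
      have : (a • p + b • q).2 = a * p.2 + b * q.2 := rfl
      rw [this]
      linarith
  set V : Set (↥K × ℝ) := {p | ‖p.1‖ < ε ∧ P.Fobj (p.1 : ENvec n d) < p.2} with hV
  have hVopen : IsOpen V := by
    apply IsOpen.inter
    · exact isOpen_lt (continuous_norm.comp continuous_fst) continuous_const
    · exact isOpen_lt (P.Fobj_cont.comp (continuous_subtype_val.comp continuous_fst))
        continuous_snd
  have hVC : V ⊆ C := by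
    rintro p ⟨hp1, hp2⟩
    refine ⟨(p.1 : ENvec n d), fun i => ?_, ⟨0, by refine PiLp.ext fun i => ?_; simp [constv]⟩, hp2⟩
    have : (p.1 : ENvec n d) i ∈ Metric.ball (0 : Evec d) ε := by
      rw [mem_ball_zero_iff]
      exact lt_of_le_of_lt (comp_norm_le _ i) hp1
    exact Set.mem_iInter.mp (hball this) i
  set v₀ : ↥K × ℝ := (0, P.Fobj 0 + 1) with hv₀def
  have hv₀V : v₀ ∈ V := by
    constructor
    · show ‖(0 : ↥K)‖ < ε; simpa using hε
    · show P.Fobj ((0 : ↥K) : ENvec n d) < P.Fobj 0 + 1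
      have : ((0 : ↥K) : ENvec n d) = 0 := rfl
      rw [this]; linarith
  have hv₀ : v₀ ∈ interior C := interior_maximal hVC hVopen hv₀V
  obtain ⟨φ, hφ⟩ := geometric_hahn_banach_open_point hconv.interior isOpen_interior
    (fun h => hz₀ (interior_subset h))
  have hdecomp : ∀ (u : ↥K) (t : ℝ), φ (u, t) = φ (u, 0) + t * φ (0, 1) := by
    intro u t
    have he : ((u, t) : ↥K × ℝ) = (u, 0) + t • ((0 : ↥K), (1 : ℝ)) := by
      simp [Prod.ext_iff]
    rw [he, map_add, map_smul, smul_eq_mul]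
  set β := φ ((0 : ↥K), (1 : ℝ)) with hβdef
  have hφ00 : φ ((0 : ↥K), (0 : ℝ)) = 0 := by
    have : ((0 : ↥K), (0 : ℝ)) = (0 : ↥K × ℝ) := rfl
    rw [this, map_zero]
  have hφz₀ : φ z₀ = P.Fstar * β := by
    rw [hz₀def, hdecomp, hφ00, zero_add]
  have hφC : ∀ a ∈ C, φ a ≤ φ z₀ := by
    intro a ha
    apply le_of_forall01 (K := φ a - φ v₀)
    intro t ht0 ht1
    have hmem : t • v₀ + (1 - t) • a ∈ interior C :=
      hconv.combo_interior_self_subset_interior ht0 (by linarith) (by ring)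
        (Set.add_mem_add (Set.smul_mem_smul_set hv₀) (Set.smul_mem_smul_set ha))
    have h1 := hφ _ hmem
    rw [map_add, map_smul, map_smul, smul_eq_mul, smul_eq_mul] at h1
    linarith
  have hF0 : P.Fstar ≤ P.Fobj 0 := by
    have h0mem : (0 : Evec d) ∈ ⋂ i, P.X i := interior_subset P.hzero
    have := P.hxstar_min 0 h0mem
    calc P.Fstar = ∑ i, P.f i P.xstar := rfl
      _ ≤ ∑ i, P.f i 0 := this
      _ = P.Fobj 0 := rfl
  have hβ : β < 0 := by
    have h1 := hφ _ hv₀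
    rw [hv₀def, hdecomp, hφ00, zero_add, hφz₀] at h1
    by_contra hcon
    push_neg at hcon
    nlinarith
  have hmain : ∀ x : ENvec n d, (∀ i, x i ∈ P.X i) →
      φ (Submodule.orthogonalProjectionOnto K x, 0) + P.Fobj x * β ≤ P.Fstar * β := by
    intro x hx
    have hdec : ∃ y, x = ((Submodule.orthogonalProjectionOnto K x : ↥K) : ENvec n d) + constv y := by
      obtain ⟨y, hy⟩ := orth_eq_const' P.hn _ (K.sub_starProjection_mem_orthogonal x)
      exact ⟨y, by rw [Submodule.starProjection_apply] at hy; rw [← hy]; abel⟩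
    apply le_of_forall01 (K := -β)
    intro t ht0 ht1
    have hmem : ((Submodule.orthogonalProjectionOnto K x, P.Fobj x + t) : ↥K × ℝ) ∈ C :=
      ⟨x, hx, hdec, by show P.Fobj x < P.Fobj x + t; linarith⟩
    have h1 := hφC _ hmem
    rw [hdecomp, hφz₀] at h1
    have hexp : (P.Fobj x + t) * β = P.Fobj x * β + t * β := by ring
    linarith
  set Ψ : ENvec n d →L[ℝ] ℝ :=
    φ.comp ((ContinuousLinearMap.inl ℝ (↥K) ℝ).comp (Submodule.orthogonalProjectionOnto K)) with hΨ
  have hΨapp : ∀ x : ENvec n d, Ψ x = φ (Submodule.orthogonalProjectionOnto K x, 0) := fun x => rfl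
  set v := (InnerProductSpace.toDual ℝ (ENvec n d)).symm Ψ with hv
  have hvapp : ∀ x : ENvec n d, (inner ℝ v x : ℝ) = Ψ x := fun x =>
    InnerProductSpace.toDual_symm_apply
  have hvK : v ∈ K := by
    show ∑ i, v i = 0
    have hy : ∀ y : Evec d, (inner ℝ (∑ i, v i) y : ℝ) = 0 := by
      intro y
      rw [← inner_constv, hvapp, hΨapp]
      have hproj : Submodule.orthogonalProjectionOnto K (constv y) = 0 :=
        Submodule.orthogonalProjectionOnto_apply_of_mem_orthogonal (const_mem_orth y)
      rw [hproj, hφ00]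
    have := hy (∑ i, v i)
    rwa [inner_self_eq_zero] at this
  refine ⟨(-β)⁻¹ • v, Submodule.smul_mem _ _ hvK, ?_⟩
  set ws : ENvec n d := (-β)⁻¹ • v with hws
  set xx := P.xtv ws with hxxdef
  have hxx : ∀ i, xx i ∈ P.X i := fun i => P.hxt_mem i (ws i)
  have hD : P.D ws = (inner ℝ ws xx : ℝ) - P.Fobj xx := by
    rw [PiLp.inner_apply]
    show ∑ i, P.dconj i (ws i) = (∑ i, (inner ℝ (ws i) (xx i) : ℝ)) - ∑ i, P.f i (xx i)
    rw [← Finset.sum_sub_distrib]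
    rfl
  have hvx : (inner ℝ v xx : ℝ) = (-β) * (inner ℝ ws xx : ℝ) := by
    have hvw : v = (-β) • ws := by
      rw [hws, smul_inv_smul₀ (by linarith : -β ≠ 0)]
    rw [hvw, real_inner_smul_left]
  have h1 := hmain xx hxx
  rw [← hΨapp, ← hvapp, hvx] at h1
  have hβpos : 0 < -β := by linarith
  have h2 : (-β) * ((inner ℝ ws xx : ℝ) - P.Fobj xx) ≤ (-β) * (-P.Fstar) := by nlinarith
  have h3 := le_of_mul_le_mul_left h2 hβpos
  rw [hD]
  exact h3

lemma Dstar_eq : P.Dstar = -P.Fstar := by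
  obtain ⟨ws, hws, hle⟩ := P.exists_dual_opt
  have hbdd : BddBelow (P.D '' (Sperp n d : Set (ENvec n d))) := by
    refine ⟨-P.Fstar, ?_⟩
    rintro r ⟨w, hw, rfl⟩
    exact P.weak_duality w hw
  apply le_antisymm
  · exact le_trans (csInf_le hbdd ⟨ws, hws, rfl⟩) hle
  · exact le_csInf ⟨P.D ws, ws, hws, rfl⟩ (by rintro r ⟨w, hw, rfl⟩; exact P.weak_duality w hw)

end Setup


section Final

variable {n d : ℕ}

theorem stmt15' (P : Setup n d) :
    ∀ w ∈ Sperp n d,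
      ‖projSperp (P.xtv w)‖ ≤ ‖P.xtv w - P.xstarv‖ ∧
      ‖P.xtv w - P.xstarv‖ ≤ Real.sqrt (2 * P.Lmax * (P.D w - P.Dstar)) ∧
      1 / (2 * P.Lmax) * ‖P.xtv w - P.xstarv‖ ^ 2 ≤ P.D w - P.Dstar := by
  intro w hw
  have hw' : ∑ i, w i = 0 := hw
  have i₀ : Fin n := ⟨0, by have := P.hn; omega⟩
  have hbdd : BddAbove (Set.range P.Lip) := Set.Finite.bddAbove (Set.finite_range _)
  have hLle : ∀ i, P.Lip i ≤ P.Lmax := fun i => le_ciSup hbdd i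
  have hLippos : ∀ i, 0 < P.Lip i := fun i => by
    have := P.hθ i
    unfold Setup.Lip
    positivity
  have hLpos : 0 < P.Lmax := lt_of_lt_of_le (hLippos i₀) (hLle i₀)
  have hθL : ∀ i, 1 / (2 * P.Lmax) ≤ P.θ i / 2 := by
    intro i
    have h1 : 1 / P.θ i ≤ P.Lmax := hLle i
    have hθ := P.hθ i
    rw [div_le_div_iff₀ (by positivity) (by norm_num)]
    have h2 : 1 ≤ P.Lmax * P.θ i := by
      have := (div_le_iff₀ hθ).mp h1
      linarith
    nlinarith
  have hkey : ∀ i, P.θ i / 2 * ‖P.xt i (w i) - P.xstar‖ ^ 2 ≤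
      P.dconj i (w i) - (ip (w i) P.xstar - P.f i P.xstar) := fun i =>
    key_bound (P.X i) (P.f i) (P.θ i) (P.hXconv i) (P.hfconv i) (P.hstrong i)
      (w i) (P.xt i (w i)) P.xstar (P.hxt_mem i (w i)) (P.xstar_mem i) (P.hxt_max i (w i))
  have hsum0 : ∑ i, ip (w i) P.xstar = 0 := by
    simp only [ip]
    rw [← sum_inner, hw']
    exact inner_zero_left _
  have hnormsq : ‖P.xtv w - P.xstarv‖ ^ 2 = ∑ i, ‖P.xt i (w i) - P.xstar‖ ^ 2 := by
    have h := PiLp.norm_sq_eq_of_L2 (fun _ : Fin n => Evec d) (P.xtv w - P.xstarv)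
    exact h
  have hDstar : P.Dstar = -P.Fstar := P.Dstar_eq
  have h3 : 1 / (2 * P.Lmax) * ‖P.xtv w - P.xstarv‖ ^ 2 ≤ P.D w - P.Dstar := by
    rw [hDstar, hnormsq, Finset.mul_sum]
    have e1 : ∑ i, (P.dconj i (w i) - (ip (w i) P.xstar - P.f i P.xstar)) = P.D w + P.Fstar := by
      rw [Finset.sum_sub_distrib, Finset.sum_sub_distrib, hsum0]
      show P.D w - (0 - P.Fstar) = P.D w + P.Fstar
      ring
    calc ∑ i, 1 / (2 * P.Lmax) * ‖P.xt i (w i) - P.xstar‖ ^ 2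
        ≤ ∑ i, P.θ i / 2 * ‖P.xt i (w i) - P.xstar‖ ^ 2 :=
          Finset.sum_le_sum fun i _ => mul_le_mul_of_nonneg_right (hθL i) (sq_nonneg _)
      _ ≤ ∑ i, (P.dconj i (w i) - (ip (w i) P.xstar - P.f i P.xstar)) :=
          Finset.sum_le_sum fun i _ => hkey i
      _ = P.D w + P.Fstar := e1
      _ = P.D w - -P.Fstar := by ring
  have hsq : ‖P.xtv w - P.xstarv‖ ^ 2 ≤ 2 * P.Lmax * (P.D w - P.Dstar) := by
    have h4 := mul_le_mul_of_nonneg_left h3 (by positivity : (0:ℝ) ≤ 2 * P.Lmax)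
    rw [← mul_assoc, mul_one_div, div_self (by positivity : (2 * P.Lmax : ℝ) ≠ 0), one_mul] at h4
    exact h4
  have h2 : ‖P.xtv w - P.xstarv‖ ≤ Real.sqrt (2 * P.Lmax * (P.D w - P.Dstar)) := by
    have := Real.sqrt_le_sqrt hsq
    rwa [Real.sqrt_sq (norm_nonneg _)] at this
  have hxs_orth : P.xstarv ∈ (Sperp n d)ᗮ := const_mem_orth (n := n) P.xstar
  have hproj : Submodule.orthogonalProjectionOnto (Sperp n d) (P.xtv w) =
      Submodule.orthogonalProjectionOnto (Sperp n d) (P.xtv w - P.xstarv) := by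
    rw [map_sub, Submodule.orthogonalProjectionOnto_apply_of_mem_orthogonal hxs_orth,
      sub_zero]
  have h1 : ‖projSperp (P.xtv w)‖ ≤ ‖P.xtv w - P.xstarv‖ := by
    show ‖((Submodule.orthogonalProjectionOnto (Sperp n d) (P.xtv w) : ↥(Sperp n d)) : ENvec n d)‖ ≤ _
    rw [hproj]
    have ha := ContinuousLinearMap.le_opNorm (Submodule.orthogonalProjectionOnto (Sperp n d))
      (P.xtv w - P.xstarv)
    have hb := Submodule.orthogonalProjectionOnto_norm_le (Sperp n d)
    have hc : ‖((Submodule.orthogonalProjectionOnto (Sperp n d) (P.xtv w - P.xstarv) : ↥(Sperp n d)) :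
        ENvec n d)‖ = ‖Submodule.orthogonalProjectionOnto (Sperp n d) (P.xtv w - P.xstarv)‖ := rfl
    rw [hc]
    nlinarith [norm_nonneg (P.xtv w - P.xstarv)]
  exact ⟨h1, h2, h3⟩

end Final

theorem stmt15 {n d : ℕ} (P : Setup n d) :
    ∀ w ∈ Sperp n d,
      ‖projSperp (P.xtv w)‖ ≤ ‖P.xtv w - P.xstarv‖ ∧
      ‖P.xtv w - P.xstarv‖ ≤ Real.sqrt (2 * P.Lmax * (P.D w - P.Dstar)) ∧
      1 / (2 * P.Lmax) * ‖P.xtv w - P.xstarv‖ ^ 2 ≤ P.D w - P.Dstar :=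
  stmt15' P
end
end
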